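/- arXiv:0805.2981 — 4 statements merged into one kernel-verified Lean document; each statement's English description precedes it below -/
import Mathlib

section
/- Let K be a field and L a Lie algebra over K with a direct sum decomposition L = S ⊕ M of K-vector spaces, where S is a Lie subalgebra of L and [S, M] ⊆ M. Writing z = z_S + z_M for the decomposition of z ∈ L along L = S ⊕ M, the operation B(x, y) := [x_S, y_S] + [x_S, y_M] + [x_M, y_S] is bilinear, alternating, and satisfies the Jacobi identity; hence B is a Lie bracket on the underlying vector space of L (the Inönü–Wigner contraction g of L associated with the reduction L ⊇ S), in which S is a Lie subalgebra and M is an abelian ideal. -/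
/-- The projection of `L` onto the subalgebra `S` along the complement `M`. -/
noncomputable def projS {K : Type*} [Field K] {L : Type*} [LieRing L] [LieAlgebra K L]
    (S : LieSubalgebra K L) (M : Submodule K L) (h : IsCompl S.toSubmodule M) :
    L →ₗ[K] L :=
  S.toSubmodule.subtype ∘ₗ Submodule.linearProjOfIsCompl S.toSubmodule M h

/-- The projection of `L` onto the complement `M` along the subalgebra `S`. -/
noncomputable def projM {K : Type*} [Field K] {L : Type*} [LieRing L] [LieAlgebra K L]
    (S : LieSubalgebra K L) (M : Submodule K L) (h : IsCompl S.toSubmodule M) :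
    L →ₗ[K] L :=
  M.subtype ∘ₗ Submodule.linearProjOfIsCompl M S.toSubmodule h.symm

/-- The bracket of the Inönü–Wigner contraction associated with the reduction `L ⊇ S`:
`B(x, y) = [x_S, y_S] + [x_S, y_M] + [x_M, y_S]`. -/
noncomputable def iwBracket {K : Type*} [Field K] {L : Type*} [LieRing L] [LieAlgebra K L]
    (S : LieSubalgebra K L) (M : Submodule K L) (h : IsCompl S.toSubmodule M)
    (x y : L) : L :=
  ⁅projS S M h x, projS S M h y⁆ + ⁅projS S M h x, projM S M h y⁆
    + ⁅projM S M h x, projS S M h y⁆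

section aux

variable {K : Type*} [Field K] {L : Type*} [LieRing L] [LieAlgebra K L]
  (S : LieSubalgebra K L) (M : Submodule K L) (h : IsCompl S.toSubmodule M)

lemma projS_mem (z : L) : projS S M h z ∈ S :=
  (Submodule.linearProjOfIsCompl S.toSubmodule M h z).2

lemma projM_mem (z : L) : projM S M h z ∈ M :=
  (Submodule.linearProjOfIsCompl M S.toSubmodule h.symm z).2

lemma projS_of_memS {x : L} (hx : x ∈ S) : projS S M h x = x := by
  simp [projS, Submodule.linearProjOfIsCompl, Submodule.projectionOnto_apply_of_mem_left h hx]

lemma projS_of_memM {x : L} (hx : x ∈ M) : projS S M h x = 0 := by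
  simp [projS, Submodule.linearProjOfIsCompl, Submodule.projectionOnto_apply_of_mem_right h hx]

lemma projM_of_memM {x : L} (hx : x ∈ M) : projM S M h x = x := by
  simp [projM, Submodule.linearProjOfIsCompl, Submodule.projectionOnto_apply_of_mem_left h.symm hx]

lemma projM_of_memS {x : L} (hx : x ∈ S) : projM S M h x = 0 := by
  simp [projM, Submodule.linearProjOfIsCompl, Submodule.projectionOnto_apply_of_mem_right h.symm hx]

lemma projS_add_of_mem {a b : L} (ha : a ∈ S) (hb : b ∈ M) :
    projS S M h (a + b) = a := by
  rw [map_add, projS_of_memS S M h ha, projS_of_memM S M h hb, add_zero]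

lemma projM_add_of_mem {a b : L} (ha : a ∈ S) (hb : b ∈ M) :
    projM S M h (a + b) = b := by
  rw [map_add, projM_of_memS S M h ha, projM_of_memM S M h hb, zero_add]

end aux

/-- If `L = S ⊕ M` with `S` a Lie subalgebra and `[S, M] ⊆ M`, then the
operation `B(x, y) := [x_S, y_S] + [x_S, y_M] + [x_M, y_S]` is bilinear, alternating and
satisfies the Jacobi identity, hence is a Lie bracket on `L` (the Inönü–Wigner contraction),
in which `S` is a Lie subalgebra and `M` is an abelian ideal. -/
theorem stmt0 {K : Type*} [Field K] {L : Type*} [LieRing L] [LieAlgebra K L]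
    (S : LieSubalgebra K L) (M : Submodule K L)
    (hcompl : IsCompl S.toSubmodule M)
    (hSM : ∀ x ∈ S, ∀ m ∈ M, ⁅x, m⁆ ∈ M) :
    -- B is bilinear
    (∀ x x' y : L, iwBracket S M hcompl (x + x') y
        = iwBracket S M hcompl x y + iwBracket S M hcompl x' y) ∧
    (∀ (a : K) (x y : L), iwBracket S M hcompl (a • x) y = a • iwBracket S M hcompl x y) ∧
    (∀ x y y' : L, iwBracket S M hcompl x (y + y')
        = iwBracket S M hcompl x y + iwBracket S M hcompl x y') ∧
    (∀ (a : K) (x y : L), iwBracket S M hcompl x (a • y) = a • iwBracket S M hcompl x y) ∧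
    -- B is alternating
    (∀ x : L, iwBracket S M hcompl x x = 0) ∧
    -- B satisfies the Jacobi identity (Leibniz form)
    (∀ x y z : L, iwBracket S M hcompl x (iwBracket S M hcompl y z)
        = iwBracket S M hcompl (iwBracket S M hcompl x y) z
          + iwBracket S M hcompl y (iwBracket S M hcompl x z)) ∧
    -- S is a subalgebra for B
    (∀ x ∈ S, ∀ y ∈ S, iwBracket S M hcompl x y ∈ S) ∧
    -- M is an ideal for B
    (∀ x : L, ∀ m ∈ M, iwBracket S M hcompl x m ∈ M) ∧
    -- M is abelian for B
    (∀ m ∈ M, ∀ m' ∈ M, iwBracket S M hcompl m m' = 0) := by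
  have hSmem := projS_mem S M hcompl
  have hMmem := projM_mem S M hcompl
  -- the M-part of a bracket value is in M
  have hmix : ∀ x y : L, ⁅projS S M hcompl x, projM S M hcompl y⁆
      + ⁅projM S M hcompl x, projS S M hcompl y⁆ ∈ M := by
    intro x y
    refine M.add_mem (hSM _ (hSmem x) _ (hMmem y)) ?_
    have : ⁅projM S M hcompl x, projS S M hcompl y⁆
        = -⁅projS S M hcompl y, projM S M hcompl x⁆ := by rw [← lie_skew]
    rw [this]
    exact M.neg_mem (hSM _ (hSmem y) _ (hMmem x))
  have hBS : ∀ x y : L, projS S M hcompl (iwBracket S M hcompl x y)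
      = ⁅projS S M hcompl x, projS S M hcompl y⁆ := by
    intro x y
    have : iwBracket S M hcompl x y = ⁅projS S M hcompl x, projS S M hcompl y⁆
        + (⁅projS S M hcompl x, projM S M hcompl y⁆
          + ⁅projM S M hcompl x, projS S M hcompl y⁆) := by
      simp [iwBracket, add_assoc]
    rw [this, projS_add_of_mem S M hcompl (S.lie_mem (hSmem x) (hSmem y)) (hmix x y)]
  have hBM : ∀ x y : L, projM S M hcompl (iwBracket S M hcompl x y)
      = ⁅projS S M hcompl x, projM S M hcompl y⁆
        + ⁅projM S M hcompl x, projS S M hcompl y⁆ := by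
    intro x y
    have : iwBracket S M hcompl x y = ⁅projS S M hcompl x, projS S M hcompl y⁆
        + (⁅projS S M hcompl x, projM S M hcompl y⁆
          + ⁅projM S M hcompl x, projS S M hcompl y⁆) := by
      simp [iwBracket, add_assoc]
    rw [this, projM_add_of_mem S M hcompl (S.lie_mem (hSmem x) (hSmem y)) (hmix x y)]
  refine ⟨?_, ?_, ?_, ?_, ?_, ?_, ?_, ?_, ?_⟩
  · intro x x' y; simp only [iwBracket, map_add, add_lie, lie_add]; abel
  · intro a x y; simp only [iwBracket, map_smul, smul_lie, lie_smul, smul_add]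
  · intro x y y'; simp only [iwBracket, map_add, add_lie, lie_add]; abel
  · intro a x y; simp only [iwBracket, map_smul, smul_lie, lie_smul, smul_add]
  · intro x
    simp only [iwBracket, lie_self, zero_add]
    have : ⁅projM S M hcompl x, projS S M hcompl x⁆
        = -⁅projS S M hcompl x, projM S M hcompl x⁆ := by rw [← lie_skew]
    rw [this, add_neg_cancel]
  · intro x y z
    have hBS' : ∀ x y : L, projS S M hcompl
        (⁅projS S M hcompl x, projS S M hcompl y⁆ + ⁅projS S M hcompl x, projM S M hcompl y⁆
          + ⁅projM S M hcompl x, projS S M hcompl y⁆)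
        = ⁅projS S M hcompl x, projS S M hcompl y⁆ := fun x y => hBS x y
    have hBM' : ∀ x y : L, projM S M hcompl
        (⁅projS S M hcompl x, projS S M hcompl y⁆ + ⁅projS S M hcompl x, projM S M hcompl y⁆
          + ⁅projM S M hcompl x, projS S M hcompl y⁆)
        = ⁅projS S M hcompl x, projM S M hcompl y⁆
          + ⁅projM S M hcompl x, projS S M hcompl y⁆ := fun x y => hBM x y
    simp only [iwBracket]
    rw [hBS' y z, hBM' y z, hBS' x y, hBM' x y, hBS' x z, hBM' x z]
    simp only [lie_add, add_lie, lie_lie]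
    abel
  · intro x hx y hy
    simp only [iwBracket, projS_of_memS S M hcompl hx, projS_of_memS S M hcompl hy,
      projM_of_memS S M hcompl hx, projM_of_memS S M hcompl hy, lie_zero, zero_lie,
      add_zero]
    exact S.lie_mem hx hy
  · intro x m hm
    simp only [iwBracket, projS_of_memM S M hcompl hm, projM_of_memM S M hcompl hm,
      lie_zero, zero_add, add_zero]
    exact hSM _ (hSmem x) _ hm
  · intro m hm m' hm'
    simp only [iwBracket, projS_of_memM S M hcompl hm, projS_of_memM S M hcompl hm',
      lie_zero, zero_lie, add_zero, zero_add]
end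

section
/- Let K be a field and L a finite-dimensional Lie algebra over K with basis X_1, …, X_n and structure constants C_{ij}^k, such that span(X_1, …, X_s) is a Lie subalgebra S and M := span(X_{s+1}, …, X_n) satisfies [S, M] ⊆ M. Let C'_{ij}^k be the structure constants of the associated Inönü–Wigner contraction g (C'_{ij}^k = C_{ij}^k unless both i > s and j > s, in which case C'_{ij}^k = 0). Then for every 1 ≤ i ≤ s, the coadjoint vector fields coincide: D_i = D'_i as derivations of K[x_1, …, x_n]. Consequently, every polynomial invariant of the contraction g (a polynomial F with D'_iF = 0 for all 1 ≤ i ≤ n) is a solution of the missing label subsystem of L, i.e. satisfies D_iF = 0 for all 1 ≤ i ≤ s. -/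
/-- The coadjoint vector field `D_i = Σ_{j,k} C_{ij}^k x_k ∂/∂x_j` associated with the
structure constants `C`, acting on the polynomial ring `K[x_1, …, x_n]`. -/
noncomputable def coadD {K : Type*} [Field K] {n : ℕ}
    (C : Fin n → Fin n → Fin n → K) (i : Fin n) :
    MvPolynomial (Fin n) K → MvPolynomial (Fin n) K :=
  fun F => ∑ j, ∑ k, C i j k • (MvPolynomial.X k * MvPolynomial.pderiv j F)

/-- Let `X_1, …, X_n` be a basis of a Lie algebra `L` adapted to a reduction
chain: `S = span(X_1, …, X_s)` is a subalgebra and `M = span(X_{s+1}, …, X_n)` satisfies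
`[S, M] ⊆ M`.  If `C'` are the structure constants of the associated Inönü–Wigner contraction
(`C'ᵢⱼᵏ = Cᵢⱼᵏ` except `C'ᵢⱼᵏ = 0` when both `i, j` exceed `s`), then the coadjoint vector
fields `D_i` and `D'_i` coincide for `1 ≤ i ≤ s`; consequently every polynomial invariant of
the contraction solves the missing label subsystem `D_iF = 0`, `1 ≤ i ≤ s`, of `L`. -/
theorem stmt3 {K : Type*} [Field K] {L : Type*} [LieRing L] [LieAlgebra K L]
    {n s : ℕ} (hsn : s ≤ n) (b : Module.Basis (Fin n) K L)
    (C : Fin n → Fin n → Fin n → K)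
    (hC : ∀ i j, ⁅b i, b j⁆ = ∑ k, C i j k • b k)
    (hSsub : ∀ x ∈ Submodule.span K (⇑b '' {i : Fin n | (i : ℕ) < s}),
        ∀ y ∈ Submodule.span K (⇑b '' {i : Fin n | (i : ℕ) < s}),
        ⁅x, y⁆ ∈ Submodule.span K (⇑b '' {i : Fin n | (i : ℕ) < s}))
    (hSM : ∀ x ∈ Submodule.span K (⇑b '' {i : Fin n | (i : ℕ) < s}),
        ∀ m ∈ Submodule.span K (⇑b '' {i : Fin n | s ≤ (i : ℕ)}),
        ⁅x, m⁆ ∈ Submodule.span K (⇑b '' {i : Fin n | s ≤ (i : ℕ)}))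
    (C' : Fin n → Fin n → Fin n → K)
    (hC' : ∀ i j k, C' i j k = if s ≤ (i : ℕ) ∧ s ≤ (j : ℕ) then 0 else C i j k) :
    (∀ i : Fin n, (i : ℕ) < s → ∀ F : MvPolynomial (Fin n) K,
        coadD C i F = coadD C' i F) ∧
    (∀ F : MvPolynomial (Fin n) K, (∀ i : Fin n, coadD C' i F = 0) →
        ∀ i : Fin n, (i : ℕ) < s → coadD C i F = 0) := by
  have key : ∀ i : Fin n, (i : ℕ) < s → ∀ F : MvPolynomial (Fin n) K,
      coadD C i F = coadD C' i F := by
    intro i hi F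
    unfold coadD
    refine Finset.sum_congr rfl fun j _ => Finset.sum_congr rfl fun k _ => ?_
    rw [hC' i j k, if_neg (fun h => absurd hi (not_lt.2 h.1))]
  exact ⟨key, fun F hF i hi => (key i hi F).trans (hF i)⟩
end

section
/- Let K be a field and L a finite-dimensional Lie algebra over K with basis X_1, …, X_n and structure constants C_{ij}^k, such that span(X_1, …, X_s) is a Lie subalgebra S and M := span(X_{s+1}, …, X_n) satisfies [S, M] ⊆ M. If a polynomial F ∈ K[x_1, …, x_n] satisfies D_iF = 0 for all 1 ≤ i ≤ s (in particular, if F is a Casimir invariant of L, i.e. D_iF = 0 for all 1 ≤ i ≤ n), then every bihomogeneous component Φ_{(a,b)} of F also satisfies D_iΦ_{(a,b)} = 0 for all 1 ≤ i ≤ s; that is, each term of the decomposition of a Casimir operator into bihomogeneous components is a solution of the missing label problem for the reduction L ⊇ S. -/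
/-- Degree of a monomial exponent in the subalgebra variables `x_1, …, x_s`. -/
def degS {n : ℕ} (s : ℕ) (d : Fin n →₀ ℕ) : ℕ :=
  ∑ i ∈ Finset.univ.filter (fun i : Fin n => (i : ℕ) < s), d i

/-- Degree of a monomial exponent in the complementary variables `x_{s+1}, …, x_n`. -/
def degM {n : ℕ} (s : ℕ) (d : Fin n →₀ ℕ) : ℕ :=
  ∑ i ∈ Finset.univ.filter (fun i : Fin n => s ≤ (i : ℕ)), d i

/-- The bihomogeneous component of bidegree `(a, b)` of a polynomial `F`. -/
noncomputable def bihomComp {K : Type*} [Field K] {n : ℕ} (s a b : ℕ)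
    (F : MvPolynomial (Fin n) K) : MvPolynomial (Fin n) K :=
  ∑ d ∈ F.support.filter (fun d => degS s d = a ∧ degM s d = b),
    MvPolynomial.monomial d (F.coeff d)

open MvPolynomial in
lemma coadD_add {K : Type*} [Field K] {n : ℕ} (C : Fin n → Fin n → Fin n → K) (i : Fin n)
    (F G : MvPolynomial (Fin n) K) :
    coadD C i (F + G) = coadD C i F + coadD C i G := by
  simp only [coadD, map_add, mul_add, smul_add, Finset.sum_add_distrib]

lemma degS_add {n : ℕ} (s : ℕ) (d e : Fin n →₀ ℕ) : degS s (d + e) = degS s d + degS s e := by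
  simp [degS, Finsupp.add_apply, Finset.sum_add_distrib]

lemma degM_add {n : ℕ} (s : ℕ) (d e : Fin n →₀ ℕ) : degM s (d + e) = degM s d + degM s e := by
  simp [degM, Finsupp.add_apply, Finset.sum_add_distrib]

lemma degS_single {n : ℕ} (s : ℕ) (j : Fin n) :
    degS s (Finsupp.single j 1) = if (j : ℕ) < s then 1 else 0 := by
  simp [degS, Finsupp.single_apply]

lemma degM_single {n : ℕ} (s : ℕ) (j : Fin n) :
    degM s (Finsupp.single j 1) = if s ≤ (j : ℕ) then 1 else 0 := by
  simp [degM, Finsupp.single_apply]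

open MvPolynomial in
/-- The bidegree-preservation lemma for `coadD` on monomials. -/
lemma coadD_monomial_support {K : Type*} [Field K] {n s : ℕ}
    (C : Fin n → Fin n → Fin n → K)
    (hC1 : ∀ i j k : Fin n, (i : ℕ) < s → (j : ℕ) < s → s ≤ (k : ℕ) → C i j k = 0)
    (hC2 : ∀ i j k : Fin n, (i : ℕ) < s → s ≤ (j : ℕ) → (k : ℕ) < s → C i j k = 0)
    (i : Fin n) (hi : (i : ℕ) < s) (d : Fin n →₀ ℕ) (c : K) :
    ∀ e ∈ (coadD C i (MvPolynomial.monomial d c)).support,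
      degS s e = degS s d ∧ degM s e = degM s d := by
  intro e he
  unfold coadD at he
  have h1 := MvPolynomial.support_sum he
  rw [Finset.mem_biUnion] at h1
  obtain ⟨j, -, hj⟩ := h1
  have h2 := MvPolynomial.support_sum hj
  rw [Finset.mem_biUnion] at h2
  obtain ⟨k, -, hk⟩ := h2
  rw [pderiv_monomial] at hk
  have hX : (X k : MvPolynomial (Fin n) K) * monomial (d - Finsupp.single j 1) (c * d j)
      = monomial (Finsupp.single k 1 + (d - Finsupp.single j 1)) (c * d j) := by
    rw [X, monomial_mul, one_mul]
  rw [hX, smul_monomial] at hk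
  have hk2 := MvPolynomial.support_monomial_subset hk
  rw [Finset.mem_singleton] at hk2
  subst hk2
  -- the coefficient is nonzero
  have hne : C i j k • (c * (d j : K)) ≠ 0 := by
    intro h0
    rw [h0] at hk
    simp at hk
  have hCne : C i j k ≠ 0 := fun h => hne (by rw [h, zero_smul])
  have hdj : d j ≠ 0 := by
    intro h0
    apply hne
    rw [h0]
    simp
  have hle : Finsupp.single j 1 ≤ d := by
    rw [Finsupp.single_le_iff]
    omega
  have hrestore : d - Finsupp.single j 1 + Finsupp.single j 1 = d :=
    tsub_add_cancel_of_le hle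
  have hdS : degS s d = degS s (d - Finsupp.single j 1) + degS s (Finsupp.single j 1) := by
    conv_lhs => rw [← hrestore]
    rw [degS_add]
  have hdM : degM s d = degM s (d - Finsupp.single j 1) + degM s (Finsupp.single j 1) := by
    conv_lhs => rw [← hrestore]
    rw [degM_add]
  by_cases hjs : (j : ℕ) < s
  · have hks : (k : ℕ) < s := by
      by_contra hk'
      exact hCne (hC1 i j k hi hjs (le_of_not_gt hk'))
    constructor
    · rw [degS_add, hdS, degS_single, degS_single, if_pos hjs, if_pos hks]; omega
    · rw [degM_add, hdM, degM_single, degM_single, if_neg (by omega), if_neg (by omega)]; omega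
  · have hks : s ≤ (k : ℕ) := by
      by_contra hk'
      exact hCne (hC2 i j k hi (le_of_not_gt hjs) (lt_of_not_ge hk'))
    constructor
    · rw [degS_add, hdS, degS_single, degS_single, if_neg hjs, if_neg (by omega)]; omega
    · rw [degM_add, hdM, degM_single, degM_single, if_pos (by omega), if_pos (by omega)]; omega

lemma coadD_zero {K : Type*} [Field K] {n : ℕ} (C : Fin n → Fin n → Fin n → K) (i : Fin n) :
    coadD C i 0 = 0 := by
  simp [coadD]

lemma coadD_sum {K : Type*} [Field K] {n : ℕ} (C : Fin n → Fin n → Fin n → K) (i : Fin n)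
    {α : Type*} (t : Finset α) (f : α → MvPolynomial (Fin n) K) :
    coadD C i (∑ x ∈ t, f x) = ∑ x ∈ t, coadD C i (f x) := by
  classical
  induction t using Finset.cons_induction with
  | empty => simp [coadD_zero]
  | cons x t hx ih => rw [Finset.sum_cons, Finset.sum_cons, coadD_add, ih]

lemma structconst {K : Type*} [Field K] {L : Type*} [LieRing L] [LieAlgebra K L]
    {n : ℕ} (b : Module.Basis (Fin n) K L) (C : Fin n → Fin n → Fin n → K)
    (hC : ∀ i j, ⁅b i, b j⁆ = ∑ k, C i j k • b k)
    {p q : Fin n → Prop}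
    (h : ∀ i j : Fin n, p i → p j →
      ⁅b i, b j⁆ ∈ Submodule.span K (⇑b '' {i : Fin n | q i}))
    (i j k : Fin n) (hi : p i) (hj : p j) (hk : ¬ q k) : C i j k = 0 := by
  have hm := h i j hi hj
  rw [Module.Basis.mem_span_image] at hm
  have hrep : b.repr ⁅b i, b j⁆ k = C i j k := by
    rw [hC, map_sum]
    simp [Module.Basis.repr_self, Finsupp.single_apply]
  by_contra hne
  have : k ∈ (b.repr ⁅b i, b j⁆).support := by
    rw [Finsupp.mem_support_iff, hrep]; exact hne
  exact hk (hm this)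


/-- Let `X_1, …, X_n` be a basis of a Lie algebra `L` adapted to a reduction
chain: `S = span(X_1, …, X_s)` is a subalgebra and `M = span(X_{s+1}, …, X_n)` satisfies
`[S, M] ⊆ M`.  If `F` satisfies `D_iF = 0` for all `1 ≤ i ≤ s` (in particular, if `F` is a
Casimir invariant of `L`), then every bihomogeneous component `Φ_{(a,b)}` of `F` satisfies
`D_iΦ_{(a,b)} = 0` for all `1 ≤ i ≤ s`: every term of the decomposition of a Casimir operator
is a solution of the missing label problem for the reduction `L ⊇ S`. -/
theorem stmt5 {K : Type*} [Field K] {L : Type*} [LieRing L] [LieAlgebra K L]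
    {n s : ℕ} (hsn : s ≤ n) (b : Module.Basis (Fin n) K L)
    (C : Fin n → Fin n → Fin n → K)
    (hC : ∀ i j, ⁅b i, b j⁆ = ∑ k, C i j k • b k)
    (hSsub : ∀ x ∈ Submodule.span K (⇑b '' {i : Fin n | (i : ℕ) < s}),
        ∀ y ∈ Submodule.span K (⇑b '' {i : Fin n | (i : ℕ) < s}),
        ⁅x, y⁆ ∈ Submodule.span K (⇑b '' {i : Fin n | (i : ℕ) < s}))
    (hSM : ∀ x ∈ Submodule.span K (⇑b '' {i : Fin n | (i : ℕ) < s}),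
        ∀ m ∈ Submodule.span K (⇑b '' {i : Fin n | s ≤ (i : ℕ)}),
        ⁅x, m⁆ ∈ Submodule.span K (⇑b '' {i : Fin n | s ≤ (i : ℕ)}))
    (F : MvPolynomial (Fin n) K)
    (hF : ∀ i : Fin n, (i : ℕ) < s → coadD C i F = 0) :
    ∀ a bdeg : ℕ, ∀ i : Fin n, (i : ℕ) < s →
      coadD C i (bihomComp s a bdeg F) = 0 := by
  classical
  -- structure constant vanishing
  have hmem : ∀ i : Fin n, (i:ℕ) < s → b i ∈ Submodule.span K (⇑b '' {i : Fin n | (i : ℕ) < s}) :=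
    fun i hi => Submodule.subset_span ⟨i, hi, rfl⟩
  have hmemM : ∀ i : Fin n, s ≤ (i:ℕ) → b i ∈ Submodule.span K (⇑b '' {i : Fin n | s ≤ (i : ℕ)}) :=
    fun i hi => Submodule.subset_span ⟨i, hi, rfl⟩
  have hC1 : ∀ i j k : Fin n, (i : ℕ) < s → (j : ℕ) < s → s ≤ (k : ℕ) → C i j k = 0 := by
    intro i j k hi hj hk
    exact structconst b C hC (p := fun i => (i:ℕ) < s) (q := fun i => (i:ℕ) < s)
      (fun i j hi hj => hSsub (b i) (hmem i hi) (b j) (hmem j hj)) i j k hi hj (by omega)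
  have hC2 : ∀ i j k : Fin n, (i : ℕ) < s → s ≤ (j : ℕ) → (k : ℕ) < s → C i j k = 0 := by
    intro i j k hi hj hk
    have h' : ∀ i j : Fin n, (i:ℕ) < s → s ≤ (j:ℕ) →
        ⁅b i, b j⁆ ∈ Submodule.span K (⇑b '' {i : Fin n | s ≤ (i : ℕ)}) :=
      fun i j hi hj => hSM (b i) (hmem i hi) (b j) (hmemM j hj)
    -- adapt structconst with p/q mixed: redo directly
    have hm := h' i j hi hj
    rw [Module.Basis.mem_span_image] at hm
    have hrep : b.repr ⁅b i, b j⁆ k = C i j k := by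
      rw [hC i j, map_sum]
      simp [Module.Basis.repr_self, Finsupp.single_apply]
    by_contra hne
    have hks : k ∈ (b.repr ⁅b i, b j⁆).support := by
      rw [Finsupp.mem_support_iff, hrep]; exact hne
    exact absurd (hm hks) (by simpa using hk)
  intro a bdeg i hi
  set P : (Fin n →₀ ℕ) → Prop := fun d => degS s d = a ∧ degM s d = bdeg with hP
  set Φ := bihomComp s a bdeg F with hΦdef
  set Ψ : MvPolynomial (Fin n) K :=
    ∑ d ∈ F.support.filter (fun d => ¬ P d), MvPolynomial.monomial d (F.coeff d) with hΨdef
  have hsplit : Φ + Ψ = F := by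
    rw [hΦdef, hΨdef, bihomComp, Finset.sum_filter_add_sum_filter_not]
    exact F.support_sum_monomial_coeff
  have hzero : coadD C i Φ + coadD C i Ψ = 0 := by
    rw [← coadD_add, hsplit]; exact hF i hi
  -- support of coadD of the two parts
  have hsuppΦ : ∀ e ∈ (coadD C i Φ).support, P e := by
    intro e he
    rw [hΦdef, bihomComp, coadD_sum] at he
    obtain ⟨d, hd, hed⟩ := Finset.mem_biUnion.mp (MvPolynomial.support_sum he)
    obtain ⟨hdS, hdM⟩ := coadD_monomial_support C hC1 hC2 i hi d (F.coeff d) e hed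
    rw [Finset.mem_filter] at hd
    exact ⟨by rw [hdS, hd.2.1], by rw [hdM, hd.2.2]⟩
  have hsuppΨ : ∀ e ∈ (coadD C i Ψ).support, ¬ P e := by
    intro e he
    rw [hΨdef, coadD_sum] at he
    obtain ⟨d, hd, hed⟩ := Finset.mem_biUnion.mp (MvPolynomial.support_sum he)
    obtain ⟨hdS, hdM⟩ := coadD_monomial_support C hC1 hC2 i hi d (F.coeff d) e hed
    rw [Finset.mem_filter] at hd
    intro hPe
    exact hd.2 ⟨by rw [← hdS, hPe.1], by rw [← hdM, hPe.2]⟩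
  ext e
  rw [MvPolynomial.coeff_zero]
  by_cases hPe : P e
  · have h1 : MvPolynomial.coeff e (coadD C i Ψ) = 0 := by
      rw [← MvPolynomial.notMem_support_iff]
      exact fun h => hsuppΨ e h hPe
    have := congrArg (MvPolynomial.coeff e) hzero
    rw [MvPolynomial.coeff_add, h1, add_zero, MvPolynomial.coeff_zero] at this
    exact this
  · rw [← MvPolynomial.notMem_support_iff]
    exact fun h => hPe (hsuppΦ e h)
end

section
/- Let g be the 8-dimensional complex Lie algebra with basis {L_j (j = 1,2,3), T_{jk} = T_{kj} (1 ≤ j,k ≤ 3, with T_{11} + T_{22} + T_{33} = 0)} and brackets [L_j, L_k] = iε_{jkl}L_l, [L_j, T_{kl}] = iε_{jkm}T_{lm} + iε_{jlm}T_{km}, [T_{jk}, T_{lm}] = (i/4)(δ_{jl}ε_{kmn} + δ_{jm}ε_{kln} + δ_{kl}ε_{jmn} + δ_{km}ε_{jln})L_n (summation over repeated indices from 1 to 3). Then in the universal enveloping algebra U(g), the symmetrized cubic element C_3 := Sym(Σ_{i,k,l} T_{ik}T_{kl}T_{li}) commutes with L_1, L_2 and L_3; i.e. the contracted cubic invariant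 is a missing label operator for the Elliott reduction su(3) ⊃ so(3). -/
/-- The Levi-Civita symbol `ε` on three indices, as a complex number. -/
noncomputable def eps3 (a b c : Fin 3) : ℂ :=
  ((((b.val : ℤ) - (a.val : ℤ)) * ((c.val : ℤ) - (b.val : ℤ))
      * ((c.val : ℤ) - (a.val : ℤ)) : ℤ) : ℂ) / 2

/-- The Kronecker delta, as a complex number. -/
noncomputable def kdelta (a b : Fin 3) : ℂ := if a = b then 1 else 0

/-- The symmetrization `Sym(abc) = (1/3!) Σ_{σ ∈ S_3} Y_{σ(1)}Y_{σ(2)}Y_{σ(3)}` of a cubic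
monomial in the universal enveloping algebra. -/
noncomputable def sym3 {g : Type*} [LieRing g] [LieAlgebra ℂ g] (a b c : g) :
    UniversalEnvelopingAlgebra ℂ g :=
  (6 : ℂ)⁻¹ • ∑ σ : Equiv.Perm (Fin 3),
    (List.ofFn fun i => UniversalEnvelopingAlgebra.ι ℂ (![a, b, c] (σ i))).prod

section AuxLemmas

set_option maxHeartbeats 4000000

variable {g : Type*} [LieRing g] [LieAlgebra ℂ g]

local notation "ι" => UniversalEnvelopingAlgebra.ι ℂ

attribute [local instance 100] LieRing.ofAssociativeRing

/-- `sym3` written out as an explicit sum of the six permuted products. -/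
lemma sym3_eq (a b c : g) :
    sym3 a b c = (6:ℂ)⁻¹ • (ι a * ι b * ι c + ι a * ι c * ι b + ι b * ι a * ι c
      + ι b * ι c * ι a + ι c * ι a * ι b + ι c * ι b * ι a) := by
  rw [sym3]
  congr 1
  rw [show (Finset.univ : Finset (Equiv.Perm (Fin 3))) =
      {Equiv.refl _, Equiv.swap 0 1, Equiv.swap 0 2, Equiv.swap 1 2,
       Equiv.swap 0 1 * Equiv.swap 1 2, Equiv.swap 0 2 * Equiv.swap 1 2} from by decide]
  rw [Finset.sum_insert (by decide), Finset.sum_insert (by decide),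
    Finset.sum_insert (by decide), Finset.sum_insert (by decide),
    Finset.sum_insert (by decide), Finset.sum_singleton]
  simp only [List.ofFn_succ, List.ofFn_zero, List.prod_cons, List.prod_nil, mul_one]
  norm_num [Equiv.swap_apply_def, Matrix.cons_val_zero, Matrix.cons_val_one, Matrix.head_cons,
    mul_assoc]
  simp (config := { decide := true }) only [Matrix.cons_val_zero, Matrix.cons_val_one,
    Matrix.head_cons, Matrix.cons_val_two, Matrix.tail_cons, if_true, if_false]
  abel

/-- Moving a generator `ι w` past a cubic monomial produces bracket correction terms. -/
lemma mul_L (w x y z : g) : (ι x * ι y * ι z) * ι w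
    = ι w * (ι x * ι y * ι z) - ι ⁅w,x⁆ * ι y * ι z - ι x * ι ⁅w,y⁆ * ι z
      - ι x * ι y * ι ⁅w,z⁆ := by
  have h : ∀ a b : g, ι ⁅a,b⁆ = ι a * ι b - ι b * ι a := fun a b => by
    rw [LieHom.map_lie, Ring.lie_def]
  simp only [h]; noncomm_ring

end AuxLemmas

set_option maxHeartbeats 4000000 in
/-- In the complexified `su(3)` in the Elliott basis `{L_j, T_{jk}}`, the
symmetrized contracted cubic invariant `C_3 = Sym(Σ T_{ik}T_{kl}T_{li})` commutes with
`L_1, L_2, L_3` in the universal enveloping algebra: it is a missing label operator for the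
reduction `su(3) ⊃ so(3)`. -/
theorem stmt10 {g : Type*} [LieRing g] [LieAlgebra ℂ g]
    (L : Fin 3 → g) (T : Fin 3 → Fin 3 → g)
    (hTsym : ∀ j k, T j k = T k j)
    (hTtr : T 0 0 + T 1 1 + T 2 2 = 0)
    (hLL : ∀ j k, ⁅L j, L k⁆ = ∑ l, (Complex.I * eps3 j k l) • L l)
    (hLT : ∀ j k l, ⁅L j, T k l⁆ =
      (∑ m, (Complex.I * eps3 j k m) • T l m) + ∑ m, (Complex.I * eps3 j l m) • T k m)
    (hTT : ∀ j k l m, ⁅T j k, T l m⁆ =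
      ∑ p, (Complex.I / 4 * (kdelta j l * eps3 k m p + kdelta j m * eps3 k l p
        + kdelta k l * eps3 j m p + kdelta k m * eps3 j l p)) • L p) :
    ∀ j, (∑ i, ∑ k, ∑ l, sym3 (T i k) (T k l) (T l i)) * UniversalEnvelopingAlgebra.ι ℂ (L j)
        = UniversalEnvelopingAlgebra.ι ℂ (L j)
          * ∑ i, ∑ k, ∑ l, sym3 (T i k) (T k l) (T l i) := by
  have hC : (∑ i, ∑ k, ∑ l, sym3 (T i k) (T k l) (T l i))
      = ∑ i, ∑ k, ∑ l, UniversalEnvelopingAlgebra.ι ℂ (T i k)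
          * UniversalEnvelopingAlgebra.ι ℂ (T k l) * UniversalEnvelopingAlgebra.ι ℂ (T l i) := by
    simp only [sym3_eq, Fin.sum_univ_three]
    simp only [hTsym 1 0, hTsym 2 0, hTsym 2 1]
    module
  intro j
  rw [hC]
  simp only [Fin.sum_univ_three]
  simp only [hTsym 1 0, hTsym 2 0, hTsym 2 1]
  fin_cases j <;>
  · simp only [add_mul, mul_L]
    simp only [hLT, Fin.sum_univ_three]
    norm_num [eps3]
    simp only [map_add, map_smul, map_neg, smul_mul_assoc, mul_smul_comm, add_mul, mul_add,
      sub_mul, mul_sub, neg_mul, mul_neg]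
    simp only [hTsym 1 0, hTsym 2 0, hTsym 2 1]
    module
end
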